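/- For every integer j ≥ 1, the eavesdropper-leakage term does not exceed the corresponding legitimate-channel term, g_j ≤ t_j; consequently the achievable secrecy-rate (inner-bound) expression is nonnegative: I(L) ≥ 0 for every integer L ≥ 1. -/

import Mathlib

open Finset Filter Topology

/-- Binary entropy function with base-2 logarithm. `Real.logb 2 0 = 0`, so
`H2 0 = H2 1 = 0` automatically. -/
noncomputable def H2 (p : ℝ) : ℝ :=
  -(p * Real.logb 2 p) - (1 - p) * Real.logb 2 (1 - p)

/-- Partial sums `s_j = ∑_{k=1}^j c_k` of the beam-budget sequence. -/
noncomputable def s (K B : ℝ) : ℕ → ℝ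
  | 0 => 0
  | (j+1) => s K B j + min ((K - s K B j) / 2) B

/-- The beam-budget sequence: `c_0 = 0` and `c_j = min((K - s_{j-1})/2, B)` for `j ≥ 1`. -/
noncomputable def c (K B : ℝ) : ℕ → ℝ
  | 0 => 0
  | (j+1) => min ((K - s K B j) / 2) B

/-- The `j`-th term of the outer bound (Theorem 1), for `j ≥ 1`. -/
noncomputable def t (K B : ℝ) (j : ℕ) : ℝ :=
  (1 - s K B (j-1) / K) * H2 (c K B j / (K - s K B (j-1))) + s K B (j-1) / K

/-- The outer-bound (Theorem 1) expression `U(L)`. -/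
noncomputable def U (K B : ℝ) (L : ℕ) : ℝ :=
  (1 / (L : ℝ)) * ∑ j ∈ Finset.Icc 1 L, t K B j

/-- The `j`-th eavesdropper-leakage term, for `j ≥ 1` (natural subtraction makes the
middle term vanish at `j = 1` and the final sum empty for `j ≤ 3`). -/
noncomputable def g (K B : ℝ) (j : ℕ) : ℝ :=
  ((K - s K B (j-1)) / K) * H2 (c K B j / K)
  + (c K B (j-1) * (K - s K B (j-2)) / K^2) *
      H2 ((1/2) * c K B (j-1) / (K - s K B (j-2)))
  + ∑ k ∈ Finset.Icc 1 (j-3),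
      (1/K) * ((c K B (k+1))^2 / K^2) * (1/2 : ℝ)^(2*(j-k-2)-1)

/-- The gap `G(L)` between the outer and inner bounds. -/
noncomputable def G (K B : ℝ) (L : ℕ) : ℝ :=
  (1 / (L : ℝ)) * ∑ j ∈ Finset.Icc 1 L, g K B j

/-- The inner-bound (Theorem 2) expression `I(L) = U(L) - G(L)`. -/
noncomputable def Ib (K B : ℝ) (L : ℕ) : ℝ := U K B L - G K B L

lemma H2_eq (p : ℝ) : H2 p = Real.binEntropy p / Real.log 2 := by
  simp [H2, Real.binEntropy, Real.logb, Real.log_inv]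
  ring

lemma H2_nonneg {p : ℝ} (h0 : 0 ≤ p) (h1 : p ≤ 1) : 0 ≤ H2 p := by
  rw [H2_eq]
  exact div_nonneg (Real.binEntropy_nonneg h0 h1) (Real.log_nonneg one_le_two)

lemma H2_le_one (p : ℝ) : H2 p ≤ 1 := by
  rw [H2_eq, div_le_one (Real.log_pos one_lt_two)]
  exact Real.binEntropy_le_log_two

lemma H2_mono {x y : ℝ} (h0 : 0 ≤ x) (hxy : x ≤ y) (hy : y ≤ 1/2) : H2 x ≤ H2 y := by
  rw [H2_eq, H2_eq]
  have h := Real.binEntropy_strictMonoOn.monotoneOn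
      (a := x) (b := y) ⟨h0, by linarith⟩ ⟨h0.trans hxy, by linarith⟩ hxy
  exact div_le_div_of_nonneg_right h (Real.log_nonneg one_le_two)

section facts
variable {K B : ℝ} (hK : 2 ≤ K) (hB : 0 < B)
include hK hB

lemma Ks_pos : ∀ j, 0 < K - s K B j := by
  intro j
  induction j with
  | zero => simp [s]; linarith
  | succ n ih =>
      have h1 : min ((K - s K B n) / 2) B ≤ (K - s K B n) / 2 := min_le_left _ _
      show 0 < K - (s K B n + min ((K - s K B n) / 2) B)
      linarith

lemma c_nonneg : ∀ j, 0 ≤ c K B j := by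
  intro j
  cases j with
  | zero => simp [c]
  | succ n =>
      have := Ks_pos hK hB n
      exact le_min (by linarith) hB.le

lemma s_nonneg : ∀ j, 0 ≤ s K B j := by
  intro j
  induction j with
  | zero => simp [s]
  | succ n ih =>
      have := c_nonneg hK hB (n+1)
      show 0 ≤ s K B n + min ((K - s K B n) / 2) B
      exact add_nonneg ih this

omit hK hB in
lemma s_succ (n : ℕ) : s K B (n+1) = s K B n + c K B (n+1) := rfl

omit hK hB in
lemma s_pred_add_c (n : ℕ) : s K B (n-1) + c K B n = s K B n := by
  cases n with
  | zero => simp [s, c]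
  | succ m => exact (s_succ m).symm

omit hK hB in
lemma c_le_half (n : ℕ) : c K B (n+1) ≤ (K - s K B n) / 2 := min_le_left _ _

lemma sum_c_le (m : ℕ) : ∑ k ∈ Finset.Icc 1 m, c K B (k+1) ≤ s K B (m+1) := by
  induction m with
  | zero => simpa using s_nonneg hK hB 1
  | succ n ih =>
      rw [Finset.sum_Icc_succ_top (by omega : 1 ≤ n+1)]
      rw [s_succ]
      exact add_le_add ih le_rfl

end facts

theorem stmt_13 (K : ℕ) (hK : 2 ≤ K) (B : ℝ) (hB : 0 < B) :
    (∀ j : ℕ, 1 ≤ j → g K B j ≤ t K B j) ∧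
    (∀ L : ℕ, 1 ≤ L → 0 ≤ Ib K B L) := by
  have hK' : (2:ℝ) ≤ (K:ℝ) := by exact_mod_cast hK
  have hK0 : (0:ℝ) < (K:ℝ) := by linarith
  have key : ∀ j : ℕ, 1 ≤ j → g K B j ≤ t K B j := by
    rintro ⟨⟩ hj
    · omega
    rename_i n
    have hKs := Ks_pos hK' hB
    have hc0 := c_nonneg hK' hB
    have hs0 := s_nonneg hK' hB
    -- simplify indices
    have hi1 : (n+1) - 1 = n := rfl
    have hi2 : (n+1) - 2 = n - 1 := rfl
    have hi3 : (n+1) - 3 = n - 2 := rfl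
    rw [g, t, hi1, hi2, hi3]
    have hfactor : 1 - s K B n / K = (K - s K B n) / K := by field_simp
    rw [hfactor]
    -- Term 1 inequality
    have h1 : ((K:ℝ) - s K B n) / K * H2 (c K B (n+1) / K)
        ≤ ((K:ℝ) - s K B n) / K * H2 (c K B (n+1) / (K - s K B n)) := by
      apply mul_le_mul_of_nonneg_left _ (div_nonneg (hKs n).le hK0.le)
      apply H2_mono (div_nonneg (hc0 _) hK0.le)
      · apply div_le_div_of_nonneg_left (hc0 _) (hKs n)
        linarith [hs0 n]
      · rw [div_le_div_iff₀ (hKs n) (by norm_num : (0:ℝ) < 2)]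
        have := c_le_half (K := (K:ℝ)) (B := B) n
        linarith
    -- Term 2 inequality
    have h2 : c K B n * ((K:ℝ) - s K B (n-1)) / (K:ℝ)^2 *
        H2 ((1/2) * c K B n / (K - s K B (n-1))) ≤ c K B n / K := by
      have hnum : (0:ℝ) ≤ c K B n * ((K:ℝ) - s K B (n-1)) / (K:ℝ)^2 :=
        div_nonneg (mul_nonneg (hc0 n) (hKs (n-1)).le) (by positivity)
      calc c K B n * ((K:ℝ) - s K B (n-1)) / (K:ℝ)^2 *
            H2 ((1/2) * c K B n / (K - s K B (n-1)))
          ≤ c K B n * ((K:ℝ) - s K B (n-1)) / (K:ℝ)^2 * 1 :=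
            mul_le_mul_of_nonneg_left (H2_le_one _) hnum
        _ = c K B n * ((K:ℝ) - s K B (n-1)) / (K:ℝ)^2 := mul_one _
        _ ≤ c K B n * K / (K:ℝ)^2 := by
            apply div_le_div_of_nonneg_right _ (by positivity)
            apply mul_le_mul_of_nonneg_left _ (hc0 n)
            linarith [hs0 (n-1)]
        _ = c K B n / K := by field_simp
    -- Term 3 inequality
    have h3 : (∑ k ∈ Finset.Icc 1 (n-2),
        (1/(K:ℝ)) * ((c K B (k+1))^2 / (K:ℝ)^2) * (1/2 : ℝ)^(2*((n+1)-k-2)-1))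
        ≤ s K B (n-1) / K := by
      have hterm : ∀ k ∈ Finset.Icc 1 (n-2),
          (1/(K:ℝ)) * ((c K B (k+1))^2 / (K:ℝ)^2) * (1/2 : ℝ)^(2*((n+1)-k-2)-1)
          ≤ c K B (k+1) / K := by
        intro k _
        have hck := hc0 (k+1)
        have hckK : c K B (k+1) ≤ K := by
          have := c_le_half (K := (K:ℝ)) (B := B) k
          have := hs0 k
          linarith
        have hp : ((1:ℝ)/2)^(2*((n+1)-k-2)-1) ≤ 1 :=
          pow_le_one₀ (by norm_num) (by norm_num)
        have hp0 : (0:ℝ) ≤ ((1:ℝ)/2)^(2*((n+1)-k-2)-1) := by positivity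
        calc (1/(K:ℝ)) * ((c K B (k+1))^2 / (K:ℝ)^2) * (1/2 : ℝ)^(2*((n+1)-k-2)-1)
            ≤ (1/(K:ℝ)) * ((c K B (k+1))^2 / (K:ℝ)^2) * 1 := by
              apply mul_le_mul_of_nonneg_left hp (by positivity)
          _ = (c K B (k+1))^2 / (K:ℝ)^3 := by ring
          _ ≤ c K B (k+1) * K / (K:ℝ)^3 := by
              apply div_le_div_of_nonneg_right _ (by positivity)
              calc (c K B (k+1))^2 = c K B (k+1) * c K B (k+1) := sq _
                _ ≤ c K B (k+1) * K := mul_le_mul_of_nonneg_left hckK hck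
          _ = c K B (k+1) / (K:ℝ)^2 := by field_simp
          _ ≤ c K B (k+1) / K := by
              apply div_le_div_of_nonneg_left hck hK0
              nlinarith
      calc (∑ k ∈ Finset.Icc 1 (n-2),
          (1/(K:ℝ)) * ((c K B (k+1))^2 / (K:ℝ)^2) * (1/2 : ℝ)^(2*((n+1)-k-2)-1))
          ≤ ∑ k ∈ Finset.Icc 1 (n-2), c K B (k+1) / K := Finset.sum_le_sum hterm
        _ = (∑ k ∈ Finset.Icc 1 (n-2), c K B (k+1)) / K := by
            rw [Finset.sum_div]
        _ ≤ s K B (n-1) / K := by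
            apply div_le_div_of_nonneg_right _ hK0.le
            rcases Nat.lt_or_ge n 2 with h | h
            · interval_cases n <;> simpa using hs0 _
            · have heq : n - 2 + 1 = n - 1 := by omega
              have hle := sum_c_le hK' hB (n-2)
              rwa [heq] at hle
    have hdiv : c K B n / (K:ℝ) + s K B (n-1) / (K:ℝ) = s K B n / (K:ℝ) := by
      rw [← add_div]
      congr 1
      have := s_pred_add_c (K := (K:ℝ)) (B := B) n
      linarith
    linarith [h1, h2, h3, hdiv]
  refine ⟨key, ?_⟩
  intro L hL
  have hsum : ∑ j ∈ Finset.Icc 1 L, g K B j ≤ ∑ j ∈ Finset.Icc 1 L, t K B j := by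
    apply Finset.sum_le_sum
    intro j hj
    exact key j (Finset.mem_Icc.mp hj).1
  have hL0 : (0:ℝ) ≤ 1 / (L:ℝ) := by positivity
  have : G K B L ≤ U K B L := by
    unfold G U
    exact mul_le_mul_of_nonneg_left hsum hL0
  simp [Ib]
  linarith
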